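/- Let B be an m×n complex matrix and c a row vector in ℂ^n (a 1×n matrix) with c ≠ 0, and suppose the linear system x·B = c is consistent (has at least one solution). Then the solution set of x·B = c is exactly { c·G | G is an n×m complex matrix with B·G·B = B }, i.e. every row vector of the form c·G with G a {1}-inverse of B solves the system, and every solution arises as c·G for some {1}-inverse G of B. -/

import Mathlib

open Matrix

lemma exists_linmap_gen_inverse {K V W : Type*} [Field K] [AddCommGroup V] [Module K V]
    [AddCommGroup W] [Module K W] (f : V →ₗ[K] W) :
    ∃ g : W →ₗ[K] V, f ∘ₗ (g ∘ₗ f) = f := by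
  obtain ⟨q, hq⟩ := Submodule.exists_isCompl (LinearMap.range f)
  obtain ⟨h, hh⟩ := (f.rangeRestrict).exists_rightInverse_of_surjective
    (LinearMap.range_eq_top.mpr f.surjective_rangeRestrict)
  refine ⟨h ∘ₗ (LinearMap.range f).linearProjOfIsCompl q hq, ?_⟩
  ext x
  simp only [LinearMap.comp_apply]
  have h1 : (LinearMap.range f).linearProjOfIsCompl q hq (f x)
      = ⟨f x, LinearMap.mem_range_self f x⟩ :=
    Submodule.linearProjOfIsCompl_apply_left hq ⟨f x, LinearMap.mem_range_self f x⟩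
  rw [h1]
  have h2 : f.rangeRestrict (h ⟨f x, LinearMap.mem_range_self f x⟩)
      = ⟨f x, LinearMap.mem_range_self f x⟩ := by
    have := LinearMap.congr_fun hh ⟨f x, LinearMap.mem_range_self f x⟩
    exact this
  have := congrArg (Subtype.val) h2
  simpa using this

lemma exists_one_inverse {m n : ℕ} (B : Matrix (Fin m) (Fin n) ℂ) :
    ∃ G₀ : Matrix (Fin n) (Fin m) ℂ, B * G₀ * B = B := by
  obtain ⟨g, hg⟩ := exists_linmap_gen_inverse (Matrix.toLin' B)
  refine ⟨LinearMap.toMatrix' g, ?_⟩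
  apply Matrix.toLin'.injective
  rw [Matrix.toLin'_mul, Matrix.toLin'_mul, Matrix.toLin'_toMatrix', LinearMap.comp_assoc, hg]

theorem general_solution_by_one_inverses_row {m n : ℕ}
    (B : Matrix (Fin m) (Fin n) ℂ) (c : Fin n → ℂ) (hc : c ≠ 0)
    (hcons : ∃ x : Fin m → ℂ, B.vecMul x = c) :
    {x : Fin m → ℂ | B.vecMul x = c} =
      {x : Fin m → ℂ | ∃ G : Matrix (Fin n) (Fin m) ℂ,
        B * G * B = B ∧ x = G.vecMul c} := by
  obtain ⟨x₀, hx₀⟩ := hcons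
  ext x
  simp only [Set.mem_setOf_eq]
  constructor
  · intro hx
    obtain ⟨G₀, hG₀⟩ := exists_one_inverse B
    obtain ⟨j, hj⟩ : ∃ j, c j ≠ 0 := by
      by_contra hcon
      push_neg at hcon
      exact hc (funext hcon)
    set v : Fin m → ℂ := x - Matrix.vecMul c G₀ with hv
    set u : Fin n → ℂ := Pi.single j (c j)⁻¹ with hu
    have hcG₀ : Matrix.vecMul (Matrix.vecMul c G₀) B = c := by
      rw [Matrix.vecMul_vecMul]
      nth_rewrite 1 [← hx₀]
      rw [Matrix.vecMul_vecMul, ← Matrix.mul_assoc, hG₀, hx₀]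
    have hvB : Matrix.vecMul v B = 0 := by
      rw [hv, Matrix.sub_vecMul, hx, hcG₀, sub_self]
    have hmulB : Matrix.vecMulVec u v * B = 0 := by
      ext j' k
      simp only [Matrix.mul_apply, Matrix.vecMulVec_apply, Matrix.zero_apply]
      have hs : ∑ i, v i * B i k = Matrix.vecMul v B k := by
        simp [Matrix.vecMul, dotProduct]
      calc ∑ i, u j' * v i * B i k = u j' * ∑ i, v i * B i k := by
            simp_rw [mul_assoc, ← Finset.mul_sum]
        _ = 0 := by rw [hs, hvB]; simp
    refine ⟨G₀ + Matrix.vecMulVec u v, ?_, ?_⟩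
    · rw [Matrix.mul_add, Matrix.add_mul, hG₀, Matrix.mul_assoc, hmulB, Matrix.mul_zero, add_zero]
    · rw [Matrix.vecMul_add]
      have : Matrix.vecMul c (Matrix.vecMulVec u v) = v := by
        ext i
        simp only [Matrix.vecMul, dotProduct, Matrix.vecMulVec_apply]
        have : ∑ j', c j' * (u j' * v i) = (∑ j', c j' * u j') * v i := by
          rw [Finset.sum_mul]; congr 1; ext j'; ring
        rw [this, hu]
        have : ∑ j', c j' * (Pi.single j (c j)⁻¹ : Fin n → ℂ) j' = c j * (c j)⁻¹ := by
          rw [Finset.sum_eq_single j]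
          · simp
          · intro b _ hb; simp [Pi.single_apply, hb]
          · simp
        rw [this, mul_inv_cancel₀ hj, one_mul]
      rw [this, hv]
      abel
  · rintro ⟨G, hG, rfl⟩
    rw [Matrix.vecMul_vecMul]
    nth_rewrite 1 [← hx₀]
    rw [Matrix.vecMul_vecMul, ← Matrix.mul_assoc, hG, hx₀]
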